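/- arXiv:1112.6338 — 6 statements merged into one kernel-verified Lean document; each statement's English description precedes it below -/
import Mathlib

section
/- Let J be a nontrivial interval in ℝ and f : J → X a continuous map into a complex Banach space X which is right-sided continuously differentiable on J minus its right endpoint, such that ∂₊f extends continuously to the right endpoint of J if that endpoint belongs to J. Then f is (two-sided) continuously differentiable on J and f' = ∂₊f. -/
open Set Filter Topology

/-- **One-sided continuous differentiability implies continuous differentiability.**
Let `J` be a nontrivial interval in `ℝ` and `f : J → X` continuous into a complex Banach
space `X`, right-sided continuously differentiable on `J` minus its right endpoint (with
right derivative `g`, continuous on `J`, the continuity of `g` at the right endpoint of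
`J` encoding the continuous extension of `∂₊f` there).  Then `f` is (two-sided)
continuously differentiable on `J` with derivative `f' = ∂₊f = g`. -/
theorem one_sided_contDiff_implies_contDiff
    {X : Type*} [NormedAddCommGroup X] [NormedSpace ℂ X] [CompleteSpace X]
    (J : Set ℝ) (hJint : J.OrdConnected) (hJnt : ∃ a ∈ J, ∃ b ∈ J, a < b)
    (f g : ℝ → X)
    (hf : ContinuousOn f J)
    (hg : ∀ t ∈ J, (∃ s ∈ J, t < s) → HasDerivWithinAt f (g t) (Set.Ici t) t)
    (hgc : ContinuousOn g J) :
    ∀ t ∈ J, HasDerivWithinAt f (g t) J t := by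
  intro t ht
  rw [hasDerivWithinAt_iff_isLittleO, Asymptotics.isLittleO_iff]
  intro ε hε
  -- φ x = f x - x • g t has right derivative g x - g t
  set φ : ℝ → X := fun x => f x - x • g t with hφ
  have hφc : ContinuousOn φ J :=
    hf.sub ((continuous_id.smul continuous_const).continuousOn)
  have hφd : ∀ x ∈ J, (∃ s ∈ J, x < s) →
      HasDerivWithinAt φ (g x - g t) (Set.Ici x) x := by
    intro x hx hxs
    have h1 := (hg x hx hxs).sub
      (((hasDerivWithinAt_id x (Set.Ici x)).smul_const (g t)))
    have h2 : HasDerivWithinAt (f - fun y => y • g t) (g x - g t) (Set.Ici x) x := by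
      simpa [one_smul] using h1
    exact h2
  obtain ⟨δ, hδ, hδ'⟩ := Metric.tendsto_nhdsWithin_nhds.1 (hgc t ht) ε hε
  have hball : Metric.ball t δ ∈ 𝓝[J] t :=
    nhdsWithin_le_nhds (Metric.ball_mem_nhds t hδ)
  filter_upwards [self_mem_nhdsWithin, hball] with s hs hsball
  have hdist : dist s t < δ := hsball
  have key : ∀ x ∈ J, dist x t < δ → ‖g x - g t‖ ≤ ε := by
    intro x hx hxd
    have := hδ' hx hxd
    rw [dist_eq_norm] at this
    exact this.le
  have hrearr : φ s - φ t = f s - f t - (s - t) • g t := by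
    simp only [hφ, sub_smul]
    abel
  rcases le_or_gt t s with hts | hst
  · -- case t ≤ s
    have hIcc : Set.Icc t s ⊆ J := hJint.out ht hs
    have hmvt := norm_image_sub_le_of_norm_deriv_right_le_segment
      (f := φ) (f' := fun x => g x - g t) (a := t) (b := s)
      (hφc.mono hIcc)
      (fun x hx => hφd x (hIcc ⟨hx.1, hx.2.le⟩) ⟨s, hs, hx.2⟩)
      (fun x hx => key x (hIcc ⟨hx.1, hx.2.le⟩) (by
        rw [Real.dist_eq, abs_of_nonneg (sub_nonneg.2 hx.1)]
        calc x - t < s - t := by linarith [hx.2]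
        _ ≤ |s - t| := le_abs_self _
        _ < δ := by rwa [Real.dist_eq] at hdist))
      s ⟨hts, le_refl s⟩
    rw [hrearr] at hmvt
    calc ‖f s - f t - (s - t) • g t‖ ≤ ε * (s - t) := hmvt
      _ = ε * ‖s - t‖ := by rw [Real.norm_eq_abs, abs_of_nonneg (by linarith)]
  · -- case s < t
    have hIcc : Set.Icc s t ⊆ J := hJint.out hs ht
    have hmvt := norm_image_sub_le_of_norm_deriv_right_le_segment
      (f := φ) (f' := fun x => g x - g t) (a := s) (b := t)
      (hφc.mono hIcc)
      (fun x hx => hφd x (hIcc ⟨hx.1, hx.2.le⟩) ⟨t, ht, hx.2⟩)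
      (fun x hx => key x (hIcc ⟨hx.1, hx.2.le⟩) (by
        rw [Real.dist_eq, abs_of_nonpos (by linarith [hx.2])]
        calc -(x - t) = t - x := by ring
        _ ≤ t - s := by linarith [hx.1]
        _ ≤ |s - t| := by rw [abs_sub_comm]; exact le_abs_self _
        _ < δ := by rwa [Real.dist_eq] at hdist))
      t ⟨le_of_lt hst, le_refl t⟩
    have : ‖φ s - φ t‖ ≤ ε * (t - s) := by rwa [norm_sub_rev]
    rw [hrearr] at this
    calc ‖f s - f t - (s - t) • g t‖ ≤ ε * (t - s) := this
      _ = ε * ‖s - t‖ := by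
          rw [Real.norm_eq_abs, abs_of_nonpos (by linarith)]; ring
end

section
/- Let J be a nontrivial interval in ℝ and m ∈ ℕ ∪ {0}. If A(t) is a bounded linear operator on a complex Banach space X for each t ∈ J, and t ↦ A(t) is (m+1)-times continuously differentiable with respect to the strong operator topology, then t ↦ A(t) is m-times continuously differentiable with respect to the operator-norm topology. -/
open Set Filter Topology

section Aux

variable {X : Type*} [NormedAddCommGroup X] [NormedSpace ℂ X] [CompleteSpace X]

lemma aux_neBot {J : Set ℝ} (hJint : J.OrdConnected)
    (hJnt : ∃ a ∈ J, ∃ b ∈ J, a < b) {t : ℝ} (ht : t ∈ J) :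
    (𝓝[J \ {t}] t).NeBot := by
  obtain ⟨a, ha, b, hb, hab⟩ := hJnt
  rcases lt_or_ge t b with h | h
  · have hsub : Ioo t b ⊆ J \ {t} := fun s hs =>
      ⟨hJint.out ht hb ⟨hs.1.le, hs.2.le⟩, ne_of_gt hs.1⟩
    have h1 : (𝓝[Ioo t b] t).NeBot := by
      rw [← mem_closure_iff_nhdsWithin_neBot, closure_Ioo (ne_of_lt h)]
      exact ⟨le_rfl, h.le⟩
    exact Filter.neBot_of_le (f := 𝓝[Ioo t b] t) (nhdsWithin_mono t hsub)
  · have hat : a < t := lt_of_lt_of_le hab h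
    have hsub : Ioo a t ⊆ J \ {t} := fun s hs =>
      ⟨hJint.out ha ht ⟨hs.1.le, hs.2.le⟩, ne_of_lt hs.2⟩
    have h1 : (𝓝[Ioo a t] t).NeBot := by
      rw [← mem_closure_iff_nhdsWithin_neBot, closure_Ioo (ne_of_lt hat)]
      exact ⟨hat.le, le_rfl⟩
    exact Filter.neBot_of_le (f := 𝓝[Ioo a t] t) (nhdsWithin_mono t hsub)

/-- Construction of the strong derivative as a continuous linear map, via Banach–Steinhaus. -/
lemma aux_existsB {J : Set ℝ} (hJint : J.OrdConnected)
    (hJnt : ∃ a ∈ J, ∃ b ∈ J, a < b) (A : ℝ → X →L[ℂ] X)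
    (hd : ∀ x, DifferentiableOn ℝ (fun t => A t x) J) :
    ∃ B : ℝ → X →L[ℂ] X, ∀ t ∈ J, ∀ x, HasDerivWithinAt (fun s => A s x) (B t x) J t := by
  have key : ∀ t : ℝ, ∃ B : X →L[ℂ] X, t ∈ J →
      ∀ x, HasDerivWithinAt (fun s => A s x) (B x) J t := by
    intro t
    by_cases ht : t ∈ J
    · haveI := aux_neBot hJint hJnt ht
      have htend : Tendsto (fun s : ℝ => fun x => (((s - t)⁻¹ : ℝ) • (A s - A t)) x)
          (𝓝[J \ {t}] t) (𝓝 (fun x => derivWithin (fun s => A s x) J t)) := by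
        rw [tendsto_pi_nhds]
        intro x
        have h1 := hasDerivWithinAt_iff_tendsto_slope.mp (hd x t ht).hasDerivWithinAt
        convert h1 using 1
        all_goals (funext s; simp [slope_def_module])
      refine ⟨continuousLinearMapOfTendsto _ htend, fun _ x => ?_⟩
      have hx : (continuousLinearMapOfTendsto _ htend) x
          = derivWithin (fun s => A s x) J t := rfl
      rw [hx]
      exact (hd x t ht).hasDerivWithinAt
    · exact ⟨0, fun h => absurd h ht⟩
  choose B hB using key
  exact ⟨B, fun t ht x => hB t ht x⟩

/-- Local uniform boundedness of a strongly continuous family, via Banach–Steinhaus. -/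
lemma aux_localBound {J : Set ℝ} {B : ℝ → X →L[ℂ] X} {t : ℝ}
    (hBc : ∀ x, ContinuousWithinAt (fun s => B s x) J t) :
    ∃ δ > 0, ∃ M, ∀ s ∈ J ∩ Metric.ball t δ, ‖B s‖ ≤ M := by
  by_contra h
  push_neg at h
  have hs : ∀ n : ℕ, ∃ s ∈ J ∩ Metric.ball t (1 / (n + 1)), (n : ℝ) < ‖B s‖ := by
    intro n
    obtain ⟨s, hs1, hs2⟩ := h (1 / (n + 1)) (by positivity) n
    exact ⟨s, hs1, hs2⟩
  choose s hsmem hsnorm using hs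
  have hdist : ∀ n : ℕ, dist (s n) t ≤ 1 / (n + 1) :=
    fun n => le_of_lt (Metric.mem_ball.mp (hsmem n).2)
  have hlim : Tendsto s atTop (𝓝 t) := by
    refine tendsto_iff_dist_tendsto_zero.mpr ?_
    exact squeeze_zero (fun n => dist_nonneg) hdist tendsto_one_div_add_atTop_nhds_zero_nat
  have hlim' : Tendsto s atTop (𝓝[J] t) :=
    tendsto_nhdsWithin_iff.mpr ⟨hlim, Eventually.of_forall fun n => (hsmem n).1⟩
  have hb : ∀ x, ∃ C, ∀ n, ‖B (s n) x‖ ≤ C := by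
    intro x
    have h2 : Tendsto (fun n => ‖B (s n) x‖) atTop (𝓝 ‖B t x‖) :=
      ((hBc x).tendsto.comp hlim').norm
    obtain ⟨C, hC⟩ := h2.bddAbove_range
    exact ⟨C, fun n => hC (mem_range_self n)⟩
  obtain ⟨C', hC'⟩ := banach_steinhaus (g := fun n => B (s n)) hb
  obtain ⟨n, hn⟩ := exists_nat_gt C'
  exact absurd (hsnorm n) (not_lt.mpr ((hC' n).trans hn.le))

/-- If the strong derivative family `B` is continuous in operator norm, then `A` is
norm-differentiable with derivative `B t`. -/
lemma aux_hasDeriv {J : Set ℝ} (hconv : Convex ℝ J) {A B : ℝ → X →L[ℂ] X}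
    (hB : ∀ t ∈ J, ∀ x, HasDerivWithinAt (fun s => A s x) (B t x) J t)
    (hBc : ContinuousOn B J) {t : ℝ} (ht : t ∈ J) :
    HasDerivWithinAt A (B t) J t := by
  rw [hasDerivWithinAt_iff_isLittleO, Asymptotics.isLittleO_iff]
  intro c hc
  obtain ⟨δ, hδ, hδ'⟩ : ∃ δ > 0, ∀ s ∈ J, dist s t < δ → dist (B s) (B t) < c := by
    have := Metric.continuousWithinAt_iff.mp (hBc t ht) c hc
    obtain ⟨δ, hδ, hball⟩ := this
    exact ⟨δ, hδ, fun s hs hd => hball hs hd⟩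
  filter_upwards [inter_mem_nhdsWithin J (Metric.ball_mem_nhds t hδ)]
  intro u hu
  set K := J ∩ Metric.ball t δ with hK
  have hKconv : Convex ℝ K := hconv.inter (convex_ball t δ)
  have htK : t ∈ K := ⟨ht, Metric.mem_ball_self hδ⟩
  have key : ∀ x : X, ‖A u x - A t x - (u - t) • B t x‖ ≤ c * ‖x‖ * ‖u - t‖ := by
    intro x
    have hg : ∀ r ∈ K, HasDerivWithinAt (fun v => A v x - (v - t) • B t x)
        (B r x - B t x) K r := by
      intro r hr
      have h1 : HasDerivWithinAt (fun v => A v x) (B r x) K r :=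
        (hB r hr.1 x).mono inter_subset_left
      have h2 : HasDerivWithinAt (fun v : ℝ => (v - t) • B t x) (B t x) K r := by
        have := ((hasDerivWithinAt_id r K).sub_const t).smul_const (B t x)
        simpa using this
      exact h1.sub h2
    have bound : ∀ r ∈ K, ‖B r x - B t x‖ ≤ c * ‖x‖ := by
      intro r hr
      have h1 : ‖(B r - B t) x‖ ≤ ‖B r - B t‖ * ‖x‖ := (B r - B t).le_opNorm x
      have h2 : ‖B r - B t‖ ≤ c := by
        have := hδ' r hr.1 (Metric.mem_ball.mp hr.2)
        rw [dist_eq_norm] at this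
        exact this.le
      calc ‖B r x - B t x‖ = ‖(B r - B t) x‖ := by simp
        _ ≤ ‖B r - B t‖ * ‖x‖ := h1
        _ ≤ c * ‖x‖ := mul_le_mul_of_nonneg_right h2 (norm_nonneg x)
    have hmv := hKconv.norm_image_sub_le_of_norm_hasDerivWithin_le hg bound htK hu
    have heq : (A u x - (u - t) • B t x) - (A t x - (t - t) • B t x)
        = A u x - A t x - (u - t) • B t x := by
      simp; abel
    rw [heq] at hmv
    exact hmv
  have hop : ‖A u - A t - (u - t) • B t‖ ≤ c * ‖u - t‖ := by
    refine ContinuousLinearMap.opNorm_le_bound _ (by positivity) fun x => ?_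
    have h1 : (A u - A t - (u - t) • B t) x = A u x - A t x - (u - t) • B t x := by simp
    rw [h1]
    calc ‖A u x - A t x - (u - t) • B t x‖ ≤ c * ‖x‖ * ‖u - t‖ := key x
      _ = c * ‖u - t‖ * ‖x‖ := by ring
  exact hop

end Aux

/-- **Strong `C^{m+1}` regularity implies norm `C^m` regularity.**
Let `J` be a nontrivial interval in `ℝ` and `m ∈ ℕ ∪ {0}`.  If `A t` is a bounded linear
operator on a complex Banach space `X` for each `t ∈ J`, and `t ↦ A t` is `(m+1)`-times
continuously differentiable with respect to the strong operator topology (i.e. `t ↦ A t x`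
is `C^{m+1}` for every `x ∈ X`), then `t ↦ A t` is `m`-times continuously differentiable
with respect to the operator-norm topology. -/
theorem strong_cm_succ_implies_norm_cm
    {X : Type*} [NormedAddCommGroup X] [NormedSpace ℂ X] [CompleteSpace X]
    (J : Set ℝ) (hJint : J.OrdConnected) (hJnt : ∃ a ∈ J, ∃ b ∈ J, a < b)
    (m : ℕ) (A : ℝ → X →L[ℂ] X)
    (hA : ∀ x : X, ContDiffOn ℝ (m + 1 : ℕ) (fun t => A t x) J) :
    ContDiffOn ℝ (m : ℕ) A J := by
  have hconv : Convex ℝ J := convex_iff_ordConnected.mpr hJint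
  have hUD : UniqueDiffOn ℝ J := by
    obtain ⟨a, ha, b, hb, hab⟩ := hJnt
    refine uniqueDiffOn_convex hconv ⟨(a + b) / 2, ?_⟩
    have hsub : Ioo a b ⊆ J := fun s hs => hJint.out ha hb ⟨hs.1.le, hs.2.le⟩
    exact interior_maximal hsub isOpen_Ioo ⟨by linarith, by linarith⟩
  induction m generalizing A with
  | zero =>
    obtain ⟨B, hB⟩ := aux_existsB hJint hJnt A
      (fun x => (hA x).differentiableOn (by norm_num))
    have hBeq : ∀ x, ∀ t ∈ J, B t x = derivWithin (fun s => A s x) J t :=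
      fun x t ht => ((hB t ht x).derivWithin (hUD t ht)).symm
    have hBc : ∀ x, ContinuousOn (fun t => B t x) J := fun x =>
      ((hA x).continuousOn_derivWithin hUD (by norm_num)).congr (hBeq x)
    rw [Nat.cast_zero, contDiffOn_zero]
    intro t ht
    obtain ⟨δ, hδ, M, hM⟩ := aux_localBound (t := t) (fun x => (hBc x) t ht)
    have hM0 : 0 ≤ M := le_trans (norm_nonneg _) (hM t ⟨ht, Metric.mem_ball_self hδ⟩)
    set K := J ∩ Metric.ball t δ with hKdef
    have hKconv : Convex ℝ K := hconv.inter (convex_ball t δ)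
    have htK : t ∈ K := ⟨ht, Metric.mem_ball_self hδ⟩
    have hlip : ∀ s ∈ K, ‖A s - A t‖ ≤ M * ‖s - t‖ := by
      intro s hs
      refine ContinuousLinearMap.opNorm_le_bound _ (by positivity) fun x => ?_
      have hg : ∀ r ∈ K, HasDerivWithinAt (fun v => A v x) (B r x) K r :=
        fun r hr => (hB r hr.1 x).mono inter_subset_left
      have bound : ∀ r ∈ K, ‖B r x‖ ≤ M * ‖x‖ := fun r hr =>
        ((B r).le_opNorm x).trans (mul_le_mul_of_nonneg_right (hM r hr) (norm_nonneg x))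
      have hmv := hKconv.norm_image_sub_le_of_norm_hasDerivWithin_le hg bound htK hs
      calc ‖(A s - A t) x‖ = ‖A s x - A t x‖ := by simp
        _ ≤ M * ‖x‖ * ‖s - t‖ := hmv
        _ = M * ‖s - t‖ * ‖x‖ := by ring
    rw [Metric.continuousWithinAt_iff]
    intro ε hε
    refine ⟨min δ (ε / (M + 1)), by positivity, fun {y} hy hdy => ?_⟩
    have hyK : y ∈ K := ⟨hy, Metric.mem_ball.mpr (lt_of_lt_of_le hdy (min_le_left _ _))⟩
    have h1 : ‖y - t‖ < ε / (M + 1) := by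
      have := lt_of_lt_of_le hdy (min_le_right _ _)
      rwa [dist_eq_norm] at this
    have h2 : dist (A y) (A t) ≤ M * ‖y - t‖ := by
      rw [dist_eq_norm]; exact hlip y hyK
    have h3 : (0:ℝ) ≤ ‖y - t‖ := norm_nonneg _
    have h4 : ‖y - t‖ * (M + 1) < ε := by
      rw [← lt_div_iff₀ (by linarith : (0:ℝ) < M + 1)]
      exact h1
    nlinarith [h2, h3, hM0, h4]
  | succ m ih =>
    obtain ⟨B, hB⟩ := aux_existsB hJint hJnt A
      (fun x => (hA x).differentiableOn (by simp))
    have hBeq : ∀ x, ∀ t ∈ J, B t x = derivWithin (fun s => A s x) J t :=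
      fun x t ht => ((hB t ht x).derivWithin (hUD t ht)).symm
    have hBstrong : ∀ x, ContDiffOn ℝ (m + 1 : ℕ) (fun t => B t x) J := by
      intro x
      have h1 : ContDiffOn ℝ (m + 1 : ℕ) (derivWithin (fun s => A s x) J) J := by
        refine (hA x).derivWithin hUD ?_
        norm_cast
      exact h1.congr (hBeq x)
    have hBnorm : ContDiffOn ℝ (m : ℕ) B J := ih B hBstrong
    have hBc : ContinuousOn B J := hBnorm.continuousOn
    have hder : ∀ t ∈ J, HasDerivWithinAt A (B t) J t :=
      fun t ht => aux_hasDeriv hconv hB hBc ht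
    have hcast : ((m + 1 : ℕ) : WithTop ℕ∞) = (m : WithTop ℕ∞) + 1 := by push_cast; ring
    rw [hcast, contDiffOn_succ_iff_derivWithin hUD]
    refine ⟨fun t ht => (hder t ht).differentiableWithinAt, by simp, ?_⟩
    exact hBnorm.congr fun t ht => (hder t ht).derivWithin (hUD t ht)
end

section
/- Let (X₀, 𝒜, μ) be a measure space, X = Lᵖ(X₀, ℂ) for some p ∈ [1,∞), and for each t ∈ [0,1] let E_t ∈ 𝒜 and P(t)g := χ_{E_t} · g for g ∈ X. If t ↦ P(t)g is differentiable for every g ∈ X, then t ↦ P(t) is constant. -/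
open Set Filter Topology MeasureTheory ENNReal

/-- **Differentiable families of multiplication-by-indicator projections are constant.**
Let `(X₀, 𝒜, μ)` be a measure space, `X = Lᵖ(X₀, ℂ)` for some `p ∈ [1,∞)`, and for each
`t ∈ [0,1]` let `E t ∈ 𝒜` and `P t g := χ_{E t} · g` for `g ∈ X`.  If `t ↦ P t g` is
differentiable (on `[0,1]`) for every `g ∈ X`, then `t ↦ P t` is constant. -/
theorem differentiable_indicator_projections_constant
    {X₀ : Type*} [MeasurableSpace X₀] (μ : Measure X₀)
    (p : ℝ≥0∞) [Fact (1 ≤ p)] (hp : p ≠ ⊤)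
    (E : ℝ → Set X₀) (hE : ∀ t ∈ Set.Icc (0:ℝ) 1, MeasurableSet (E t))
    (P : ℝ → Lp ℂ p μ → Lp ℂ p μ)
    (hP : ∀ t ∈ Set.Icc (0:ℝ) 1, ∀ g : Lp ℂ p μ,
      (P t g : X₀ → ℂ) =ᵐ[μ] fun x => (E t).indicator (fun _ => (1:ℂ)) x * g x)
    (hdiff : ∀ g : Lp ℂ p μ, DifferentiableOn ℝ (fun t => P t g) (Set.Icc 0 1)) :
    ∀ t ∈ Set.Icc (0:ℝ) 1, ∀ s ∈ Set.Icc (0:ℝ) 1, ∀ g : Lp ℂ p μ, P t g = P s g := by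
  set I : Set ℝ := Set.Icc (0:ℝ) 1 with hI
  set χ : ℝ → X₀ → ℂ := fun t => (E t).indicator (fun _ => (1:ℂ)) with hχdef
  -- a.e. representation of `P t h - P s h`
  have hsub : ∀ t ∈ I, ∀ s ∈ I, ∀ h : Lp ℂ p μ,
      (↑(P t h - P s h) : X₀ → ℂ) =ᵐ[μ] fun x => (χ t x - χ s x) * h x := by
    intro t ht s hs h
    filter_upwards [Lp.coeFn_sub (P t h) (P s h), hP t ht h, hP s hs h] with x h1 h2 h3
    simp only [h1, Pi.sub_apply, h2, h3]
    ring
  -- values of the indicator difference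
  have hχcases : ∀ t s : ℝ, ∀ x : X₀,
      χ t x - χ s x = 0 ∨ χ t x - χ s x = 1 ∨ χ t x - χ s x = -1 := by
    intro t s x
    by_cases h1 : x ∈ E t <;> by_cases h2 : x ∈ E s <;>
      simp [hχdef, Set.indicator_of_mem, Set.indicator_of_notMem, h1, h2]
  -- the multiplication by `χ t - χ s` is a contraction relative to double differences
  have hcontr : ∀ t ∈ I, ∀ s ∈ I, ∀ v w : Lp ℂ p μ,
      ‖(P t v - P s v) - (P t w - P s w)‖ ≤ ‖v - w‖ := by
    intro t ht s hs v w
    rw [Lp.norm_def, Lp.norm_def]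
    refine ENNReal.toReal_mono (Lp.eLpNorm_ne_top _) ?_
    have hrep : (↑((P t v - P s v) - (P t w - P s w)) : X₀ → ℂ)
        =ᵐ[μ] fun x => (χ t x - χ s x) * ((v - w : Lp ℂ p μ) x) := by
      filter_upwards [Lp.coeFn_sub (P t v - P s v) (P t w - P s w),
        hsub t ht s hs v, hsub t ht s hs w, Lp.coeFn_sub v w] with x h1 h2 h3 h4
      simp only [h1, Pi.sub_apply, h2, h3, h4]
      ring
    rw [eLpNorm_congr_ae hrep]
    refine eLpNorm_mono_ae (Filter.Eventually.of_forall fun x => ?_)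
    rw [norm_mul]
    have : ‖χ t x - χ s x‖ ≤ 1 := by
      rcases hχcases t s x with h | h | h <;> simp [h]
    calc ‖χ t x - χ s x‖ * ‖(v - w : Lp ℂ p μ) x‖
        ≤ 1 * ‖(v - w : Lp ℂ p μ) x‖ := by
          exact mul_le_mul_of_nonneg_right this (norm_nonneg _)
      _ = ‖(v - w : Lp ℂ p μ) x‖ := one_mul _
  -- the key identity: applying `P t - P s` to `P t g - P s g` does not change the norm
  have hkey : ∀ t ∈ I, ∀ s ∈ I, ∀ g : Lp ℂ p μ,
      ‖P t (P t g - P s g) - P s (P t g - P s g)‖ = ‖P t g - P s g‖ := by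
    intro t ht s hs g
    rw [Lp.norm_def, Lp.norm_def]
    congr 1
    refine eLpNorm_congr_norm_ae ?_
    filter_upwards [hsub t ht s hs (P t g - P s g), hsub t ht s hs g] with x h1 h2
    rw [h1, h2]
    rcases hχcases t s x with h | h | h <;> simp [h]
  -- scalar multiples
  have hsmul : ∀ t ∈ I, ∀ s ∈ I, ∀ (c : ℝ), ∀ h : Lp ℂ p μ,
      P t (c • h) - P s (c • h) = c • (P t h - P s h) := by
    intro t ht s hs c h
    refine Lp.ext ?_
    filter_upwards [hsub t ht s hs (c • h), hsub t ht s hs h, Lp.coeFn_smul c h,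
      Lp.coeFn_smul c (P t h - P s h)] with x h1 h2 h3 h4
    rw [h1, h3, h4]
    simp only [Pi.smul_apply, h2, Complex.real_smul]
    ring
  -- the derivative within `I` vanishes at every point of `I`
  have hderiv0 : ∀ s ∈ I, ∀ g : Lp ℂ p μ, HasDerivWithinAt (fun t => P t g) 0 I s := by
    intro s hsI g
    have hD : HasDerivWithinAt (fun t => P t g)
        (derivWithin (fun t => P t g) I s) I s := (hdiff g s hsI).hasDerivWithinAt
    set D := derivWithin (fun t => P t g) I s with hDdef
    suffices hD0 : D = 0 by rwa [hD0] at hD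
    have hslope : Tendsto (slope (fun t => P t g) s) (𝓝[I \ {s}] s) (𝓝 D) :=
      hasDerivWithinAt_iff_tendsto_slope.1 hD
    have hne : (𝓝[I \ {s}] s).NeBot := by
      rcases lt_or_eq_of_le hsI.2 with hlt | heq
      · have h1 : Ioo s 1 ⊆ I \ {s} := fun x hx =>
          ⟨⟨le_trans hsI.1 (le_of_lt hx.1), le_of_lt hx.2⟩, ne_of_gt hx.1⟩
        exact (left_nhdsWithin_Ioo_neBot hlt).mono (nhdsWithin_mono s h1)
      · have h1 : Ioo 0 s ⊆ I \ {s} := fun x hx =>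
          ⟨⟨le_of_lt hx.1, le_trans (le_of_lt hx.2) hsI.2⟩, ne_of_lt hx.2⟩
        have h0s : (0:ℝ) < s := heq ▸ zero_lt_one
        exact (right_nhdsWithin_Ioo_neBot h0s).mono (nhdsWithin_mono s h1)
    -- continuity of `t ↦ P t D` at `s` within `I`
    have hcont : Tendsto (fun t => P t D - P s D) (𝓝[I \ {s}] s) (𝓝 0) := by
      have h1 : ContinuousWithinAt (fun t => P t D) I s :=
        ((hdiff D).continuousOn) s hsI
      have h2 : Tendsto (fun t => P t D) (𝓝[I \ {s}] s) (𝓝 (P s D)) :=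
        h1.tendsto.mono_left (nhdsWithin_mono s diff_subset)
      simpa using h2.sub_const (P s D)
    -- the crucial bound
    have hbound : ∀ᶠ t in 𝓝[I \ {s}] s,
        ‖slope (fun t => P t g) s t‖
          ≤ ‖P t D - P s D‖ + ‖slope (fun t => P t g) s t - D‖ := by
      filter_upwards [self_mem_nhdsWithin] with t ht
      obtain ⟨htI, hts'⟩ := ht
      have hts : t ≠ s := by simpa using hts'
      have htssub : t - s ≠ 0 := sub_ne_zero.2 hts
      set v : Lp ℂ p μ := slope (fun t => P t g) s t with hv
      have hsl : v = (t - s)⁻¹ • (P t g - P s g) := hv.trans (slope_def_module _ _ _)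
      -- `‖v‖ = ‖P t v - P s v‖`
      have e1 : P t v - P s v = (t - s)⁻¹ • (P t (P t g - P s g) - P s (P t g - P s g)) := by
        rw [hsl]; exact hsmul t htI s hsI _ _
      have e2 : ‖v‖ = ‖P t v - P s v‖ := by
        rw [e1, norm_smul, hkey t htI s hsI g, hsl, norm_smul]
      rw [e2]
      -- triangle inequality through `P t D - P s D`
      have e3 : P t v - P s v = (P t D - P s D) + ((P t v - P s v) - (P t D - P s D)) := by
        abel
      calc ‖P t v - P s v‖
          = ‖(P t D - P s D) + ((P t v - P s v) - (P t D - P s D))‖ := congrArg norm e3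
        _ ≤ ‖P t D - P s D‖ + ‖(P t v - P s v) - (P t D - P s D)‖ := norm_add_le _ _
        _ ≤ ‖P t D - P s D‖ + ‖v - D‖ := (add_le_add_iff_left _).2 (hcontr t htI s hsI v D)
    have h1 : Tendsto (fun t => ‖slope (fun t => P t g) s t‖) (𝓝[I \ {s}] s) (𝓝 ‖D‖) :=
      hslope.norm
    have h2 : Tendsto (fun t => ‖P t D - P s D‖ + ‖slope (fun t => P t g) s t - D‖)
        (𝓝[I \ {s}] s) (𝓝 0) := by
      have := hcont.norm.add ((hslope.sub_const D).norm)
      simpa using this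
    have hle : ‖D‖ ≤ 0 := le_of_tendsto_of_tendsto h1 h2 hbound
    exact norm_le_zero_iff.1 hle
  -- conclude by the mean value inequality
  intro t ht s hs g
  have hfd : ∀ x ∈ I, HasFDerivWithinAt (fun t => P t g)
      (0 : ℝ →L[ℝ] Lp ℂ p μ) I x := by
    intro x hx
    have h1 := (hderiv0 x hx g).hasFDerivWithinAt
    have h0 : ContinuousLinearMap.toSpanSingleton ℝ (0 : Lp ℂ p μ) = 0 := by
      ext y; simp
    rwa [h0] at h1
  have hC : ∀ x ∈ I, ‖(0 : ℝ →L[ℝ] Lp ℂ p μ)‖ ≤ 0 := fun x _ => by simp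
  have := (convex_Icc (0:ℝ) 1).norm_image_sub_le_of_norm_hasFDerivWithin_le hfd hC hs ht
  have hz : ‖P t g - P s g‖ ≤ 0 := by simpa using this
  have := norm_le_zero_iff.1 hz
  exact sub_eq_zero.1 this
end

section
/- For d ∈ ℕ ∪ {∞} let A_d(λ) be the operator on ℓ²(I_d) given by the upper bidiagonal matrix with λ on the diagonal and 1 on the superdiagonal, and let λ_d := sup{λ ∈ ℝ : Re⟨x, A_d(λ)x⟩ ≤ 0 for all x ∈ ℓ²(I_d)}. Then λ_d ∈ [−1, 0] for all d, λ₁ = 0, λ_∞ = −1, λ_d → −1 as d → ∞, and the sequence (λ_d) is monotonically decreasing: λ_{d+1} ≤ λ_d for all d ∈ ℕ. -/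
open Set Filter Topology

/-- `Re ⟪x, A_d(l) x⟫` for the upper bidiagonal operator `A_d(l)` (diagonal `l`,
superdiagonal `1`) on `ℓ²(I_d) = ℂ^d`, `d` finite. -/
noncomputable def reInnerAFin (d : ℕ) (l : ℝ) (x : Fin d → ℂ) : ℝ :=
  (∑ k : Fin d, (starRingEnd ℂ) (x k) *
    ((l : ℂ) * x k + if h : (k : ℕ) + 1 < d then x ⟨(k : ℕ) + 1, h⟩ else 0)).re

/-- `λ_d := sup {l ∈ ℝ : Re ⟪x, A_d(l) x⟫ ≤ 0 for all x ∈ ℓ²(I_d)}`, `d` finite. -/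
noncomputable def lamFin (d : ℕ) : ℝ :=
  sSup {l : ℝ | ∀ x : Fin d → ℂ, reInnerAFin d l x ≤ 0}

/-- `Re ⟪x, A_∞(l) x⟫` for the upper bidiagonal operator `A_∞(l)` on `ℓ²(ℕ)`. -/
noncomputable def reInnerAInf (l : ℝ) (x : lp (fun _ : ℕ => ℂ) 2) : ℝ :=
  (∑' k : ℕ, (starRingEnd ℂ) ((x : ∀ _ : ℕ, ℂ) k) *
    ((l : ℂ) * (x : ∀ _ : ℕ, ℂ) k + (x : ∀ _ : ℕ, ℂ) (k + 1))).re

/-- `λ_∞ := sup {l ∈ ℝ : Re ⟪x, A_∞(l) x⟫ ≤ 0 for all x ∈ ℓ²(ℕ)}`. -/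
noncomputable def lamInf : ℝ :=
  sSup {l : ℝ | ∀ x : lp (fun _ : ℕ => ℂ) 2, reInnerAInf l x ≤ 0}

/-- extension by zero -/
noncomputable def extZ (d : ℕ) (x : Fin d → ℂ) : ℕ → ℂ :=
  fun n => if h : n < d then x ⟨n, h⟩ else 0

lemma reInnerAFin_eq (d : ℕ) (l : ℝ) (x : Fin d → ℂ) :
    reInnerAFin d l x = (∑ k ∈ Finset.range d,
      (starRingEnd ℂ) (extZ d x k) * ((l:ℂ) * extZ d x k + extZ d x (k+1))).re := by
  unfold reInnerAFin
  congr 1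
  rw [← Fin.sum_univ_eq_sum_range (fun k =>
    (starRingEnd ℂ) (extZ d x k) * ((l:ℂ) * extZ d x k + extZ d x (k+1))) d]
  apply Finset.sum_congr rfl
  intro k _
  have h1 : extZ d x (k : ℕ) = x k := by
    simp [extZ, k.isLt]
  have h2 : extZ d x ((k : ℕ) + 1) =
      if h : (k : ℕ) + 1 < d then x ⟨(k : ℕ) + 1, h⟩ else 0 := rfl
  rw [h1, h2]

lemma term_re_le (z w : ℂ) (l : ℝ) :
    ((starRingEnd ℂ) z * ((l:ℂ) * z + w)).re ≤ l * ‖z‖^2 + (‖w‖^2 + ‖z‖^2)/2 := by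
  have h1 : (starRingEnd ℂ) z * ((l:ℂ) * z + w)
      = (l:ℂ) * ((starRingEnd ℂ) z * z) + (starRingEnd ℂ) z * w := by ring
  rw [h1]
  have h2 : (starRingEnd ℂ) z * z = (‖z‖^2 : ℝ) := by
    rw [Complex.conj_mul']
    push_cast
    norm_num
  rw [h2]
  have h3 : ((l:ℂ) * ((‖z‖^2:ℝ):ℂ)).re = l * ‖z‖^2 := by
    rw [← Complex.ofReal_mul]; exact Complex.ofReal_re _
  rw [Complex.add_re, h3]
  have h4 : ((starRingEnd ℂ) z * w).re ≤ ‖z‖ * ‖w‖ := by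
    calc ((starRingEnd ℂ) z * w).re ≤ ‖(starRingEnd ℂ) z * w‖ := Complex.re_le_norm _
    _ = ‖z‖ * ‖w‖ := by rw [norm_mul, RCLike.norm_conj]
  nlinarith [sq_nonneg (‖z‖ - ‖w‖)]

lemma Q_neg_one_le (N : ℕ) (X : ℕ → ℂ) (hX : X N = 0) :
    (∑ k ∈ Finset.range N,
      (starRingEnd ℂ) (X k) * (((-1:ℝ):ℂ) * X k + X (k+1))).re ≤ 0 := by
  rw [Complex.re_sum]
  have key : ∀ k ∈ Finset.range N,
      ((starRingEnd ℂ) (X k) * (((-1:ℝ):ℂ) * X k + X (k+1))).re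
        ≤ ‖X (k+1)‖^2/2 - ‖X k‖^2/2 := by
    intro k _
    have := term_re_le (X k) (X (k+1)) (-1)
    nlinarith
  calc ∑ k ∈ Finset.range N, ((starRingEnd ℂ) (X k) * (((-1:ℝ):ℂ) * X k + X (k+1))).re
      ≤ ∑ k ∈ Finset.range N, (‖X (k+1)‖^2/2 - ‖X k‖^2/2) := Finset.sum_le_sum key
    _ = ‖X N‖^2/2 - ‖X 0‖^2/2 := Finset.sum_range_sub (fun k => ‖X k‖^2/2) N
    _ ≤ 0 := by rw [hX]; simp; positivity

lemma neg_one_mem_fin (d : ℕ) : ∀ x : Fin d → ℂ, reInnerAFin d (-1) x ≤ 0 := by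
  intro x
  rw [reInnerAFin_eq]
  exact Q_neg_one_le d (extZ d x) (by simp [extZ])

lemma ones_eval (d : ℕ) (hd : 1 ≤ d) (l : ℝ) :
    reInnerAFin d l (fun _ => 1) = d * l + (d - 1) := by
  obtain ⟨m, rfl⟩ := Nat.exists_eq_add_of_le hd
  rw [reInnerAFin_eq]
  have hext : ∀ n, extZ (1+m) (fun _ => (1:ℂ)) n = if n < 1+m then 1 else 0 := by
    intro n; by_cases h : n < 1+m <;> simp [extZ, h]
  rw [Complex.re_sum]
  have hterm : ∀ k ∈ Finset.range (1+m),
      ((starRingEnd ℂ) (extZ (1+m) (fun _ => (1:ℂ)) k) *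
        ((l:ℂ) * extZ (1+m) (fun _ => (1:ℂ)) k + extZ (1+m) (fun _ => (1:ℂ)) (k+1))).re
      = l + (if k + 1 < 1+m then 1 else 0) := by
    intro k hk
    rw [Finset.mem_range] at hk
    rw [hext k, hext (k+1), if_pos hk]
    by_cases h : k + 1 < 1 + m <;> simp [h]
  rw [Finset.sum_congr rfl hterm, Finset.sum_add_distrib, Finset.sum_const,
    Finset.card_range]
  have : ∑ k ∈ Finset.range (1+m), (if k + 1 < 1+m then (1:ℝ) else 0) = m := by
    rw [add_comm 1 m, Finset.sum_range_succ, if_neg (lt_irrefl _)]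
    rw [Finset.sum_congr rfl (fun k hk => if_pos (by
      rw [Finset.mem_range] at hk; omega))]
    simp
  rw [this]
  push_cast
  ring


lemma Sfin_ub {d : ℕ} (hd : 1 ≤ d) {l : ℝ}
    (hl : ∀ x : Fin d → ℂ, reInnerAFin d l x ≤ 0) : l ≤ -1 + 1/d := by
  have h := hl (fun _ => 1)
  rw [ones_eval d hd l] at h
  have hd' : (0:ℝ) < d := by exact_mod_cast hd
  have hc : (d:ℝ) * (1/d) = 1 := by field_simp
  nlinarith [hc]

lemma Sfin_bdd {d : ℕ} (hd : 1 ≤ d) :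
    BddAbove {l : ℝ | ∀ x : Fin d → ℂ, reInnerAFin d l x ≤ 0} :=
  ⟨-1 + 1/d, fun _ hl => Sfin_ub hd hl⟩

lemma lamFin_ge (d : ℕ) (hd : 1 ≤ d) : -1 ≤ lamFin d :=
  le_csSup (Sfin_bdd hd) (neg_one_mem_fin d)

lemma lamFin_le (d : ℕ) (hd : 1 ≤ d) : lamFin d ≤ -1 + 1/d :=
  csSup_le ⟨-1, neg_one_mem_fin d⟩ (fun _ hl => Sfin_ub hd hl)

lemma lamFin_one : lamFin 1 = 0 := by
  have hset : {l : ℝ | ∀ x : Fin 1 → ℂ, reInnerAFin 1 l x ≤ 0} = Set.Iic 0 := by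
    ext l
    constructor
    · intro hl
      have h := hl (fun _ => 1)
      have : reInnerAFin 1 l (fun _ => 1) = l := by
        unfold reInnerAFin
        simp
      rw [this] at h
      exact h
    · intro hl x
      have : reInnerAFin 1 l x = l * ‖x 0‖^2 := by
        unfold reInnerAFin
        rw [Fin.sum_univ_one]
        simp only [Fin.val_zero]
        have : (starRingEnd ℂ) (x 0) * ((l:ℂ) * x 0 +
            (if h : (0:ℕ) + 1 < 1 then x ⟨1, h⟩ else 0))
            = (l:ℂ) * ((‖x 0‖^2 : ℝ) : ℂ) := by
          rw [dif_neg (by norm_num)]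
          rw [add_zero]
          rw [mul_comm ((l:ℂ)) (x 0), ← mul_assoc, Complex.conj_mul']
          push_cast
          ring
        rw [this, ← Complex.ofReal_mul, Complex.ofReal_re]
      rw [this]
      exact mul_nonpos_of_nonpos_of_nonneg hl (by positivity)
  rw [lamFin, hset, csSup_Iic]

lemma Sfin_anti {d : ℕ} {l : ℝ}
    (hl : ∀ x : Fin (d+1) → ℂ, reInnerAFin (d+1) l x ≤ 0) :
    ∀ x : Fin d → ℂ, reInnerAFin d l x ≤ 0 := by
  intro x
  set y : Fin (d+1) → ℂ := fun k => extZ d x (k : ℕ) with hy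
  have hext : ∀ n, extZ (d+1) y n = extZ d x n := by
    intro n
    by_cases h : n < d + 1
    · simp only [extZ, dif_pos h, hy]
    · have h2 : ¬ n < d := by omega
      simp only [extZ, dif_neg h, dif_neg h2]
  have := hl y
  rw [reInnerAFin_eq] at this
  rw [reInnerAFin_eq]
  simp only [hext] at this
  rw [Finset.sum_range_succ] at this
  have hzero : extZ d x d = 0 := by simp [extZ]
  rw [hzero] at this
  simpa using this

lemma lamFin_mono (d : ℕ) (hd : 1 ≤ d) : lamFin (d+1) ≤ lamFin d :=
  csSup_le_csSup (Sfin_bdd hd) ⟨-1, neg_one_mem_fin (d+1)⟩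
    (fun _ hl => Sfin_anti hl)

lemma lamFin_tendsto : Tendsto (fun d : ℕ => lamFin d) atTop (nhds (-1)) := by
  have h1 : Tendsto (fun d : ℕ => (-1 : ℝ) + 1/d) atTop (nhds (-1)) := by
    have := tendsto_one_div_atTop_nhds_zero_nat (𝕜 := ℝ)
    simpa using (tendsto_const_nhds (x := (-1:ℝ))).add this
  apply tendsto_of_tendsto_of_tendsto_of_le_of_le' tendsto_const_nhds h1
  · filter_upwards [eventually_ge_atTop 1] with d hd using lamFin_ge d hd
  · filter_upwards [eventually_ge_atTop 1] with d hd using lamFin_le d hd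



lemma sq_summable (x : lp (fun _ : ℕ => ℂ) 2) :
    Summable (fun k => ‖(x : ∀ _ : ℕ, ℂ) k‖^2) := by
  have h := (lp.memℓp x).summable (by norm_num : (0:ℝ) < ENNReal.toReal 2)
  have h2 : ENNReal.toReal 2 = (2:ℝ) := by simp
  rw [h2] at h
  simpa [Real.rpow_two] using h

lemma inf_core (f : ℕ → ℂ) (hsum : Summable fun k => ‖f k‖^2) :
    (∑' k : ℕ, (starRingEnd ℂ) (f k) * (((-1:ℝ):ℂ) * f k + f (k+1))).re ≤ 0 := by
  have hshift : Summable (fun k => ‖f (k+1)‖^2) := (summable_nat_add_iff (f := fun k => ‖f k‖^2) 1).2 hsum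
  set B : ℕ → ℝ := fun k => ‖f k‖^2 + (‖f k‖^2 + ‖f (k+1)‖^2)/2 with hB
  have hBsum : Summable B := hsum.add ((hsum.add hshift).div_const 2)
  set g : ℕ → ℂ := fun k => (starRingEnd ℂ) (f k) * (((-1:ℝ):ℂ) * f k + f (k+1)) with hg
  have hgb : ∀ k, ‖g k‖ ≤ B k := by
    intro k
    have h1 : ‖g k‖ = ‖f k‖ * ‖((-1:ℝ):ℂ) * f k + f (k+1)‖ := by
      rw [hg, norm_mul, RCLike.norm_conj]
    have h2 : ‖((-1:ℝ):ℂ) * f k + f (k+1)‖ ≤ ‖f k‖ + ‖f (k+1)‖ := by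
      calc ‖((-1:ℝ):ℂ) * f k + f (k+1)‖ ≤ ‖((-1:ℝ):ℂ) * f k‖ + ‖f (k+1)‖ := norm_add_le _ _
      _ = ‖f k‖ + ‖f (k+1)‖ := by rw [norm_mul]; norm_num
    rw [h1, hB]
    have h3 : (0:ℝ) ≤ ‖f k‖ := norm_nonneg _
    nlinarith [sq_nonneg (‖f k‖ - ‖f (k+1)‖), norm_nonneg (f (k+1))]
  have hgsum : Summable g := Summable.of_norm_bounded hBsum hgb
  rw [Complex.re_tsum hgsum]
  have hre_sum : Summable (fun k => (g k).re) := (Complex.hasSum_re hgsum.hasSum).summable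
  have hub : ∀ k, (g k).re ≤ ‖f (k+1)‖^2/2 - ‖f k‖^2/2 := by
    intro k
    have := term_re_le (f k) (f (k+1)) (-1)
    rw [hg]
    nlinarith
  have hubsum : Summable (fun k => ‖f (k+1)‖^2/2 - ‖f k‖^2/2) :=
    (hshift.div_const 2).sub (hsum.div_const 2)
  calc ∑' k, (g k).re ≤ ∑' k, (‖f (k+1)‖^2/2 - ‖f k‖^2/2) :=
        Summable.tsum_le_tsum hub hre_sum hubsum
    _ = (∑' k, ‖f (k+1)‖^2)/2 - (∑' k, ‖f k‖^2)/2 := by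
        rw [Summable.tsum_sub (hshift.div_const 2) (hsum.div_const 2), tsum_div_const, tsum_div_const]
    _ ≤ 0 := by
        have h0 : ∑' k, ‖f k‖^2 = ‖f 0‖^2 + ∑' k, ‖f (k+1)‖^2 := Summable.tsum_eq_zero_add hsum
        nlinarith [sq_nonneg ‖f 0‖]

lemma neg_one_mem_inf : ∀ x : lp (fun _ : ℕ => ℂ) 2, reInnerAInf (-1) x ≤ 0 := by
  intro x
  exact inf_core _ (sq_summable x)

lemma ind_memℓp (n : ℕ) : Memℓp (fun k : ℕ => if k < n then (1:ℂ) else 0) 2 := by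
  apply memℓp_gen
  apply summable_of_ne_finset_zero (s := Finset.range n)
  intro k hk
  rw [Finset.mem_range] at hk
  rw [if_neg hk]
  simp [Real.zero_rpow]

lemma Sinf_ub {l : ℝ}
    (hl : ∀ x : lp (fun _ : ℕ => ℂ) 2, reInnerAInf l x ≤ 0) : l ≤ -1 := by
  have key : ∀ n : ℕ, 1 ≤ n → (n:ℝ) * l + ((n:ℝ) - 1) ≤ 0 := by
    intro n hn
    set F : ℕ → ℂ := fun k : ℕ => if k < n then (1:ℂ) else 0 with hF
    have hx := hl ⟨F, ind_memℓp n⟩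
    have hcoe : ((⟨F, ind_memℓp n⟩ : lp (fun _ : ℕ => ℂ) 2) : ∀ _ : ℕ, ℂ) = F := rfl
    rw [reInnerAInf, hcoe] at hx
    have hzero : ∀ k ∉ Finset.range n,
        (starRingEnd ℂ) (F k) * ((l:ℂ) * F k + F (k+1)) = 0 := by
      intro k hk
      rw [Finset.mem_range] at hk
      have : F k = 0 := if_neg hk
      rw [this]
      simp
    rw [tsum_eq_sum hzero] at hx
    have hFe : F = extZ n (fun _ => 1) := by
      funext k
      by_cases h : k < n <;> simp [hF, extZ, h]
    rw [hFe, ← reInnerAFin_eq n l (fun _ => 1), ones_eval n hn l] at hx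
    linarith
  by_contra hc
  push_neg at hc
  have hpos : 0 < l + 1 := by linarith
  obtain ⟨n, hn⟩ := exists_nat_gt (1 / (l + 1))
  have hn1 : 1 ≤ n := by
    by_contra h
    push_neg at h
    interval_cases n
    · simp at hn
      nlinarith [one_div_pos.2 hpos]
  have h2 := key n hn1
  have h3 : 1 / (l+1) < (n:ℝ) := hn
  rw [div_lt_iff₀ hpos] at h3
  nlinarith

lemma lamInf_eq : lamInf = -1 :=
  IsGreatest.csSup_eq ⟨neg_one_mem_inf, fun _ hl => Sinf_ub hl⟩

theorem lam_d_properties_aux :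
    (∀ d : ℕ, 1 ≤ d → lamFin d ∈ Set.Icc (-1 : ℝ) 0) ∧
    lamInf ∈ Set.Icc (-1 : ℝ) 0 ∧
    lamFin 1 = 0 ∧
    lamInf = -1 ∧
    Tendsto (fun d : ℕ => lamFin d) atTop (nhds (-1)) ∧
    (∀ d : ℕ, 1 ≤ d → lamFin (d + 1) ≤ lamFin d) := by
  refine ⟨?_, ?_, lamFin_one, lamInf_eq, lamFin_tendsto, lamFin_mono⟩
  · intro d hd
    refine ⟨lamFin_ge d hd, le_trans (lamFin_le d hd) ?_⟩
    have hd' : (1:ℝ) ≤ d := by exact_mod_cast hd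
    have : 1/(d:ℝ) ≤ 1 := by
      rw [div_le_one (by linarith)]; linarith
    linarith
  · rw [lamInf_eq]
    constructor <;> norm_num

/-- **Properties of the dissipativity thresholds `λ_d`.**
The numbers `λ_d` (for `d ∈ ℕ ∪ {∞}`) lie in `[−1, 0]`, `λ₁ = 0`, `λ_∞ = −1`,
`λ_d → λ_∞ = −1` as `d → ∞`, and `λ_{d+1} ≤ λ_d` for all `d ∈ ℕ`. -/
theorem lam_d_properties :
    (∀ d : ℕ, 1 ≤ d → lamFin d ∈ Set.Icc (-1 : ℝ) 0) ∧
    lamInf ∈ Set.Icc (-1 : ℝ) 0 ∧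
    lamFin 1 = 0 ∧
    lamInf = -1 ∧
    Tendsto (fun d : ℕ => lamFin d) atTop (nhds (-1)) ∧
    (∀ d : ℕ, 1 ≤ d → lamFin (d + 1) ≤ lamFin d) := by
  exact lam_d_properties_aux
end

section
/- Let A(t) : D ⊆ H → H be a family of operators on a Hilbert space H with t ↦ A(t)x continuous for all x ∈ D, and let U be an evolution family for A. Then U(t,s) is isometric for all 0 ≤ s ≤ t ≤ 1 if and only if A(t) is skew-symmetric for all t ∈ [0,1]. -/
open Set Filter Topology

/-- **Isometric evolution families and skew-symmetric generators.**
Let `A t : D ⊆ H → H` be a family of operators on a complex Hilbert space `H` with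
`t ↦ A t x` continuous for all `x ∈ D`, and let `U` be an evolution family for `A`
(cocycle property, joint strong continuity, and `t ↦ U t s x` solves `y' = A t y`,
`y s = x`, staying in `D`, for `x ∈ D`).  Then `U t s` is isometric for all
`0 ≤ s ≤ t ≤ 1` if and only if `A t` is skew-symmetric for all `t ∈ [0,1]`. -/
theorem evolution_family_isometric_iff_skew_symmetric
    {H : Type*} [NormedAddCommGroup H] [InnerProductSpace ℂ H] [CompleteSpace H]
    (D : Submodule ℂ H) (hdense : Dense (D : Set H))
    (A : ℝ → H →ₗ[ℂ] H)
    (hAc : ∀ x ∈ D, ContinuousOn (fun t => A t x) (Set.Icc 0 1))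
    (U : ℝ → ℝ → H →L[ℂ] H)
    (hUcocycle : ∀ r s t : ℝ, 0 ≤ r → r ≤ s → s ≤ t → t ≤ 1 → U t s ∘L U s r = U t r)
    (hUcont : ∀ x : H, ContinuousOn (fun p : ℝ × ℝ => U p.2 p.1 x)
      {p : ℝ × ℝ | 0 ≤ p.1 ∧ p.1 ≤ p.2 ∧ p.2 ≤ 1})
    (hUODE : ∀ s ∈ Set.Ico (0:ℝ) 1, ∀ x ∈ D, U s s x = x ∧
      ∀ t ∈ Set.Icc s 1, U t s x ∈ D ∧
        HasDerivWithinAt (fun τ => U τ s x) (A t (U t s x)) (Set.Icc s 1) t) :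
    (∀ s t : ℝ, 0 ≤ s → s ≤ t → t ≤ 1 → ∀ x : H, ‖U t s x‖ = ‖x‖) ↔
    (∀ t ∈ Set.Icc (0:ℝ) 1, ∀ x ∈ D, ∀ y ∈ D,
      (inner ℂ (A t x) y : ℂ) + (inner ℂ x (A t y) : ℂ) = 0) := by
  constructor
  · intro hiso
    -- first prove the claim for `t ∈ [0,1)`
    have key : ∀ t ∈ Set.Ico (0:ℝ) 1, ∀ x ∈ D, ∀ y ∈ D,
        (inner ℂ (A t x) y : ℂ) + (inner ℂ x (A t y) : ℂ) = 0 := by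
      intro t ht x hx y hy
      obtain ⟨ht0, ht1⟩ := ht
      obtain ⟨hx0, hx1⟩ := hUODE t ⟨ht0, ht1⟩ x hx
      obtain ⟨hy0, hy1⟩ := hUODE t ⟨ht0, ht1⟩ y hy
      have htmem : t ∈ Set.Icc t 1 := Set.left_mem_Icc.2 ht1.le
      have hdx := (hx1 t htmem).2
      have hdy := (hy1 t htmem).2
      have hD : HasDerivWithinAt (fun τ => (inner ℂ (U τ t x) (U τ t y) : ℂ))
          ((inner ℂ (U t t x) (A t (U t t y)) : ℂ) + (inner ℂ (A t (U t t x)) (U t t y) : ℂ))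
          (Set.Icc t 1) t := HasDerivWithinAt.inner ℂ hdx hdy
      have hconst : ∀ τ ∈ Set.Icc t 1,
          (inner ℂ (U τ t x) (U τ t y) : ℂ) = (inner ℂ x y : ℂ) := by
        intro τ hτ
        have hiso' : ∀ z : H, ‖U τ t z‖ = ‖z‖ := hiso t τ ht0 hτ.1 hτ.2
        exact LinearIsometry.inner_map_map ⟨(U τ t).toLinearMap, hiso'⟩ x y
      have hC : HasDerivWithinAt (fun τ => (inner ℂ (U τ t x) (U τ t y) : ℂ))
          0 (Set.Icc t 1) t :=
        (hasDerivWithinAt_const t _ ((inner ℂ x y : ℂ))).congr hconst (hconst t htmem)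
      have hu : UniqueDiffWithinAt ℝ (Set.Icc t 1) t := uniqueDiffOn_Icc ht1 t htmem
      have heq : (inner ℂ (U t t x) (A t (U t t y)) : ℂ)
          + (inner ℂ (A t (U t t x)) (U t t y) : ℂ) = 0 := by
        rw [← hD.derivWithin hu, hC.derivWithin hu]
      rw [hx0, hy0] at heq
      rw [add_comm]
      exact heq
    intro t ht x hx y hy
    rcases lt_or_eq_of_le ht.2 with ht1 | ht1
    · exact key t ⟨ht.1, ht1⟩ x hx y hy
    -- `t = 1`: use continuity of `A · x`
    subst ht1
    have hg : ContinuousOn (fun t => (inner ℂ (A t x) y : ℂ) + (inner ℂ x (A t y) : ℂ))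
        (Set.Icc (0:ℝ) 1) :=
      ((hAc x hx).inner continuousOn_const).add (continuousOn_const.inner (hAc y hy))
    have h1mem : (1:ℝ) ∈ Set.Icc (0:ℝ) 1 := by norm_num
    have htend : Tendsto (fun t => (inner ℂ (A t x) y : ℂ) + (inner ℂ x (A t y) : ℂ))
        (𝓝[Set.Ico (0:ℝ) 1] 1) (𝓝 ((inner ℂ (A 1 x) y : ℂ) + (inner ℂ x (A 1 y) : ℂ))) :=
      ((hg 1 h1mem).mono Set.Ico_subset_Icc_self)
    haveI : (𝓝[Set.Ico (0:ℝ) 1] (1:ℝ)).NeBot := by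
      refine mem_closure_iff_nhdsWithin_neBot.1 ?_
      rw [closure_Ico (by norm_num : (0:ℝ) ≠ 1)]
      exact h1mem
    have htend0 : Tendsto (fun t => (inner ℂ (A t x) y : ℂ) + (inner ℂ x (A t y) : ℂ))
        (𝓝[Set.Ico (0:ℝ) 1] 1) (𝓝 0) := by
      refine Tendsto.congr' ?_ tendsto_const_nhds
      filter_upwards [self_mem_nhdsWithin] with τ hτ
      exact (key τ hτ x hx y hy).symm
    exact tendsto_nhds_unique htend htend0
  · intro hskew
    -- main estimate: for `s < 1`, `U t s` is isometric on all of `H`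
    have main : ∀ s t : ℝ, 0 ≤ s → s < 1 → s ≤ t → t ≤ 1 → ∀ x : H, ‖U t s x‖ = ‖x‖ := by
      intro s t hs0 hs1 hst ht1
      have mainD : ∀ x ∈ D, ‖U t s x‖ = ‖x‖ := by
        intro x hx
        obtain ⟨hU0, hODE⟩ := hUODE s ⟨hs0, hs1⟩ x hx
        set f : ℝ → ℂ := fun τ => (inner ℂ (U τ s x) (U τ s x) : ℂ) with hf
        have hderiv : ∀ τ ∈ Set.Icc s 1, HasDerivWithinAt f 0 (Set.Icc s 1) τ := by
          intro τ hτ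
          obtain ⟨hmem, hd⟩ := hODE τ hτ
          have := HasDerivWithinAt.inner ℂ hd hd
          have hz : (inner ℂ (U τ s x) (A τ (U τ s x)) : ℂ)
              + (inner ℂ (A τ (U τ s x)) (U τ s x) : ℂ) = 0 := by
            rw [add_comm]
            exact hskew τ ⟨le_trans hs0 hτ.1, hτ.2⟩ _ hmem _ hmem
          rwa [hz] at this
        have hcont : ContinuousOn f (Set.Icc s 1) := fun τ hτ =>
          (hderiv τ hτ).continuousWithinAt
        have hderivR : ∀ τ ∈ Set.Ico s 1, HasDerivWithinAt f 0 (Set.Ici τ) τ := by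
          intro τ hτ
          refine (hderiv τ ⟨hτ.1, hτ.2.le⟩).mono_of_mem_nhdsWithin ?_
          refine mem_nhdsWithin.2 ⟨Set.Iio 1, isOpen_Iio, hτ.2, ?_⟩
          rintro y ⟨hy1, hy2⟩
          exact ⟨le_trans hτ.1 hy2, le_of_lt hy1⟩
        have hconst := constant_of_has_deriv_right_zero hcont hderivR t ⟨hst, ht1⟩
        have hfs : f s = (inner ℂ x x : ℂ) := by rw [hf]; simp [hU0]
        have : (inner ℂ (U t s x) (U t s x) : ℂ) = (inner ℂ x x : ℂ) := by
          rw [← hfs]; exact hconst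
        rw [inner_self_eq_norm_sq_to_K, inner_self_eq_norm_sq_to_K] at this
        have h2 : ‖U t s x‖ ^ 2 = ‖x‖ ^ 2 := by exact_mod_cast this
        nlinarith [norm_nonneg (U t s x), norm_nonneg x]
      intro x
      have hcl : IsClosed {z : H | ‖U t s z‖ = ‖z‖} :=
        isClosed_eq ((U t s).continuous.norm) continuous_norm
      have hsub : (D : Set H) ⊆ {z : H | ‖U t s z‖ = ‖z‖} := fun z hz => mainD z hz
      have : closure (D : Set H) ⊆ {z : H | ‖U t s z‖ = ‖z‖} := closure_minimal hsub hcl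
      exact this (by rw [hdense.closure_eq]; trivial)
    intro s t hs hst ht1 x
    rcases lt_or_eq_of_le (le_trans hst ht1) with hs1 | hs1
    · exact main s t hs hs1 hst ht1 x
    -- `s = 1`, hence `t = 1`: use joint strong continuity
    subst hs1
    have ht : t = 1 := le_antisymm ht1 hst
    subst ht
    have hK : ((1:ℝ), (1:ℝ)) ∈ {p : ℝ × ℝ | 0 ≤ p.1 ∧ p.1 ≤ p.2 ∧ p.2 ≤ 1} := by
      refine ⟨by norm_num, le_refl _, le_refl _⟩
    set S : Set (ℝ × ℝ) := {p : ℝ × ℝ | 0 ≤ p.1 ∧ p.1 ≤ p.2 ∧ p.2 ≤ 1} ∩ {p : ℝ × ℝ | p.1 < 1}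
      with hS
    have hmap : Tendsto (fun s : ℝ => (s, (1:ℝ))) (𝓝[Set.Ico (0:ℝ) 1] 1)
        (𝓝[S] (1, 1)) := by
      refine tendsto_nhdsWithin_of_tendsto_nhds_of_eventually_within _ ?_ ?_
      · exact ((continuous_id.prodMk continuous_const).tendsto 1).mono_left
          nhdsWithin_le_nhds
      · filter_upwards [self_mem_nhdsWithin] with τ hτ
        exact ⟨⟨hτ.1, hτ.2.le, le_refl _⟩, hτ.2⟩
    haveI : (𝓝[Set.Ico (0:ℝ) 1] (1:ℝ)).NeBot := by
      refine mem_closure_iff_nhdsWithin_neBot.1 ?_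
      rw [closure_Ico (by norm_num : (0:ℝ) ≠ 1)]
      exact ⟨by norm_num, le_refl _⟩
    haveI : (𝓝[S] ((1:ℝ), (1:ℝ))).NeBot := hmap.neBot
    have htend : Tendsto (fun p : ℝ × ℝ => ‖U p.2 p.1 x‖) (𝓝[S] (1, 1))
        (𝓝 ‖U 1 1 x‖) :=
      (((hUcont x) (1, 1) hK).mono Set.inter_subset_left).norm
    have htend' : Tendsto (fun p : ℝ × ℝ => ‖U p.2 p.1 x‖) (𝓝[S] (1, 1)) (𝓝 ‖x‖) := by
      refine Tendsto.congr' ?_ tendsto_const_nhds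
      filter_upwards [self_mem_nhdsWithin] with p hp
      exact (main p.1 p.2 hp.1.1 hp.2 hp.1.2.1 hp.1.2.2 x).symm
    exact tendsto_nhds_unique htend htend'
end

section
/- Let A(t) : D ⊆ X → X for t ∈ [0,1] with t ↦ A(t)x continuous for all x ∈ D, and let P(t) be bounded projections with P(t)A(t) ⊆ A(t)P(t) and t ↦ P(t)x continuously differentiable for all x ∈ X. Suppose for each T > 0 there exists an evolution family U_{a,T} for T·A + [P',P]. Then the intertwining relation P(t) U_{a,T}(t,s) = U_{a,T}(t,s) P(s) holds for all 0 ≤ s ≤ t ≤ 1 and all T > 0. -/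
open Set Filter Topology

open Asymptotics

/-- Strong continuity + uniform bound + continuity of the vector gives continuity of the
evaluation `τ ↦ B τ (v τ)`. -/
lemma clm_apply_continuousOn {X : Type*} [NormedAddCommGroup X] [NormedSpace ℂ X]
    {B : ℝ → X →L[ℂ] X} {v : ℝ → X} {s : Set ℝ} {M : ℝ}
    (hM : ∀ σ ∈ s, ‖B σ‖ ≤ M)
    (hB : ∀ z : X, ContinuousOn (fun σ => B σ z) s)
    (hv : ContinuousOn v s) :
    ContinuousOn (fun σ => B σ (v σ)) s := by
  intro τ hτ
  have h1 : Tendsto (fun σ => B σ (v σ - v τ)) (𝓝[s] τ) (𝓝 0) := by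
    apply squeeze_zero_norm' (a := fun σ => M * ‖v σ - v τ‖)
    · filter_upwards [self_mem_nhdsWithin] with σ hσ
      exact ((B σ).le_opNorm _).trans (mul_le_mul_of_nonneg_right (hM σ hσ) (norm_nonneg _))
    · have : Tendsto (fun σ => v σ - v τ) (𝓝[s] τ) (𝓝 0) := by
        have h : ContinuousWithinAt (fun σ => v σ - v τ) s τ :=
          (hv τ hτ).sub continuousWithinAt_const
        simpa [ContinuousWithinAt] using h
      simpa using (this.norm.const_mul M)
  have h2 : Tendsto (fun σ => B σ (v τ)) (𝓝[s] τ) (𝓝 (B τ (v τ))) := hB (v τ) τ hτ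
  have := h1.add h2
  simp only [zero_add] at this
  refine this.congr (fun σ => ?_)
  simp [map_sub]

/-- Product rule: if `τ ↦ B τ z` is differentiable for each `z` with derivative `B' z`,
`B` is uniformly bounded on `s`, and `v` is differentiable, then `τ ↦ B τ (v τ)` is
differentiable with derivative `B' (v τ) + B τ v'`. -/
lemma clm_apply_hasDerivWithinAt {X : Type*} [NormedAddCommGroup X] [NormedSpace ℂ X]
    {B : ℝ → X →L[ℂ] X} {B' : X → X} {v : ℝ → X} {v' : X} {s : Set ℝ} {τ : ℝ} {M : ℝ}
    (hM : ∀ σ ∈ s, ‖B σ‖ ≤ M)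
    (hB : ∀ z : X, HasDerivWithinAt (fun σ => B σ z) (B' z) s τ)
    (hv : HasDerivWithinAt v v' s τ) :
    HasDerivWithinAt (fun σ => B σ (v σ)) (B' (v τ) + B τ v') s τ := by
  rw [hasDerivWithinAt_iff_isLittleO]
  have key : (fun σ => B σ (v σ) - B τ (v τ) - (σ - τ) • (B' (v τ) + B τ v'))
      = fun σ => B σ (v σ - v τ - (σ - τ) • v')
        + ((B σ (v τ) - B τ (v τ) - (σ - τ) • B' (v τ)) + (σ - τ) • (B σ v' - B τ v')) := by
    funext σ
    simp only [map_sub, ContinuousLinearMap.map_smul_of_tower, smul_add, smul_sub]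
    abel
  rw [key]
  have h1 : (fun σ => B σ (v σ - v τ - (σ - τ) • v')) =o[𝓝[s] τ] fun σ => σ - τ := by
    refine IsBigO.trans_isLittleO ?_ (hasDerivWithinAt_iff_isLittleO.mp hv)
    rw [isBigO_iff]
    refine ⟨M, ?_⟩
    filter_upwards [self_mem_nhdsWithin] with σ hσ
    exact ((B σ).le_opNorm _).trans (mul_le_mul_of_nonneg_right (hM σ hσ) (norm_nonneg _))
  have h2 : (fun σ => B σ (v τ) - B τ (v τ) - (σ - τ) • B' (v τ)) =o[𝓝[s] τ] fun σ => σ - τ :=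
    hasDerivWithinAt_iff_isLittleO.mp (hB (v τ))
  have h3 : (fun σ => (σ - τ) • (B σ v' - B τ v')) =o[𝓝[s] τ] fun σ => σ - τ := by
    have hb : (fun σ : ℝ => σ - τ) =O[𝓝[s] τ] fun σ => σ - τ := isBigO_refl _ _
    have hl : (fun σ => B σ v' - B τ v') =o[𝓝[s] τ] (fun _ => (1 : ℝ)) := by
      rw [isLittleO_one_iff]
      have := (hB v').continuousWithinAt
      unfold ContinuousWithinAt at this
      simpa using this.sub (tendsto_const_nhds (x := B τ v'))
    simpa using hb.smul_isLittleO hl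
  exact h1.add (h2.add h3)

/-- **The intertwining relation for the adiabatic evolution.**
Let `A t : D ⊆ X → X` with `t ↦ A t x` continuous for all `x ∈ D`, and let `P t` be
bounded projections with `P t A t ⊆ A t P t` and `t ↦ P t x` continuously differentiable
for all `x ∈ X` (derivative `P' t x`).  Suppose for each `T > 0` there is an evolution
family `U T` for `T·A + [P', P]`.  Then the intertwining relation
`P t ∘ U T t s = U T t s ∘ P s` holds for all `0 ≤ s ≤ t ≤ 1` and all `T > 0`. -/
theorem adiabatic_evolution_intertwining
    {X : Type*} [NormedAddCommGroup X] [NormedSpace ℂ X] [CompleteSpace X]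
    (D : Submodule ℂ X) (hdense : Dense (D : Set X))
    (A : ℝ → X →ₗ[ℂ] X)
    (hAc : ∀ x ∈ D, ContinuousOn (fun t => A t x) (Set.Icc 0 1))
    (P : ℝ → X →L[ℂ] X)
    (hproj : ∀ t ∈ Set.Icc (0:ℝ) 1, P t ∘L P t = P t)
    (hcomm : ∀ t ∈ Set.Icc (0:ℝ) 1, ∀ x ∈ D, P t x ∈ D ∧ A t (P t x) = P t (A t x))
    (P' : ℝ → X → X)
    (hP' : ∀ x : X, ∀ t ∈ Set.Icc (0:ℝ) 1,
      HasDerivWithinAt (fun s => P s x) (P' t x) (Set.Icc 0 1) t)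
    (hP'c : ∀ x : X, ContinuousOn (fun t => P' t x) (Set.Icc 0 1))
    (U : ℝ → ℝ → ℝ → X →L[ℂ] X)
    (hUcocycle : ∀ T > (0:ℝ), ∀ r s t : ℝ, 0 ≤ r → r ≤ s → s ≤ t → t ≤ 1 →
      U T t s ∘L U T s r = U T t r)
    (hUcont : ∀ T > (0:ℝ), ∀ x : X, ContinuousOn (fun p : ℝ × ℝ => U T p.2 p.1 x)
      {p : ℝ × ℝ | 0 ≤ p.1 ∧ p.1 ≤ p.2 ∧ p.2 ≤ 1})
    (hUODE : ∀ T > (0:ℝ), ∀ s ∈ Set.Ico (0:ℝ) 1, ∀ x ∈ D, U T s s x = x ∧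
      ∀ t ∈ Set.Icc s 1, U T t s x ∈ D ∧
        HasDerivWithinAt (fun τ => U T τ s x)
          (T • A t (U T t s x) + (P' t (P t (U T t s x)) - P t (P' t (U T t s x))))
          (Set.Icc s 1) t) :
    ∀ T > (0:ℝ), ∀ s t : ℝ, 0 ≤ s → s ≤ t → t ≤ 1 → ∀ x : X,
      P t (U T t s x) = U T t s (P s x) := by
  -- preliminary facts about `P`
  have hPcont : ∀ z : X, ContinuousOn (fun τ => P τ z) (Icc 0 1) :=
    fun z τ hτ => (hP' z τ hτ).continuousWithinAt
  obtain ⟨MP, hMP⟩ : ∃ M : ℝ, ∀ τ ∈ Icc (0:ℝ) 1, ‖P τ‖ ≤ M := by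
    obtain ⟨C, hC⟩ := banach_steinhaus (g := fun τ : Icc (0:ℝ) 1 => P τ) (fun z => by
      obtain ⟨C, hC⟩ := isCompact_Icc.exists_bound_of_continuousOn (hPcont z)
      exact ⟨C, fun i => hC i i.2⟩)
    exact ⟨C, fun τ hτ => hC ⟨τ, hτ⟩⟩
  have hUniq : UniqueDiffOn ℝ (Icc (0:ℝ) 1) := uniqueDiffOn_Icc zero_lt_one
  have hp2 : ∀ τ ∈ Icc (0:ℝ) 1, ∀ z : X, P τ (P τ z) = P τ z := by
    intro τ hτ z
    have := hproj τ hτ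
    calc P τ (P τ z) = (P τ ∘L P τ) z := rfl
    _ = P τ z := by rw [this]
  -- additivity of `P'`
  have id3 : ∀ τ ∈ Icc (0:ℝ) 1, ∀ a b : X, P' τ (a - b) = P' τ a - P' τ b := by
    intro τ hτ a b
    have hu := hUniq τ hτ
    have h1 := hP' (a - b) τ hτ
    have h2 : HasDerivWithinAt (fun σ => P σ (a - b)) (P' τ a - P' τ b) (Icc 0 1) τ := by
      simpa [map_sub, Pi.sub_def] using (hP' a τ hτ).sub (hP' b τ hτ)
    rw [← h1.derivWithin hu, ← h2.derivWithin hu]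
  -- the Leibniz identity `P' = P' P + P P'`
  have id1 : ∀ τ ∈ Icc (0:ℝ) 1, ∀ z : X, P' τ z = P' τ (P τ z) + P τ (P' τ z) := by
    intro τ hτ z
    have hu := hUniq τ hτ
    have hprod : HasDerivWithinAt (fun σ => P σ (P σ z)) (P' τ (P τ z) + P τ (P' τ z))
        (Icc 0 1) τ :=
      clm_apply_hasDerivWithinAt hMP (fun w => hP' w τ hτ) (hP' z τ hτ)
    have h2 : HasDerivWithinAt (fun σ => P σ z) (P' τ (P τ z) + P τ (P' τ z)) (Icc 0 1) τ :=
      hprod.congr (fun σ hσ => (hp2 σ hσ z).symm) (hp2 τ hτ z).symm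
    exact ((hP' z τ hτ).derivWithin hu).symm.trans (h2.derivWithin hu)
  -- the key identity `P P' P = 0`
  have id2 : ∀ τ ∈ Icc (0:ℝ) 1, ∀ z : X, P τ (P' τ (P τ z)) = 0 := by
    intro τ hτ z
    have := id1 τ hτ (P τ z)
    rw [hp2 τ hτ z] at this
    exact (left_eq_add.mp this)
  intro T hT
  -- the identity `U T τ τ = 1`
  have hlt : ∀ τ ∈ Ico (0:ℝ) 1, ∀ z : X, U T τ τ z = z := by
    intro τ hτ
    have heq : (fun z : X => U T τ τ z) = fun z => z :=
      Continuous.ext_on hdense (U T τ τ).continuous continuous_id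
        (fun z hz => (hUODE T hT τ hτ z hz).1)
    exact fun z => congrFun heq z
  have Uid : ∀ τ ∈ Icc (0:ℝ) 1, ∀ z : X, U T τ τ z = z := by
    intro τ hτ z
    rcases lt_or_eq_of_le hτ.2 with h | h
    · exact hlt τ ⟨hτ.1, h⟩ z
    · subst h
      have hne : (𝓝[Ico (0:ℝ) 1] 1).NeBot := by
        rw [← mem_closure_iff_nhdsWithin_neBot, closure_Ico (by norm_num : (0:ℝ) ≠ 1)]
        exact ⟨zero_le_one, le_rfl⟩
      have h1 : Tendsto (fun σ : ℝ => U T σ σ z) (𝓝[Ico (0:ℝ) 1] 1) (𝓝 (U T 1 1 z)) := by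
        have hc := (hUcont T hT z) (1, 1) ⟨zero_le_one, le_rfl, le_rfl⟩
        have hdiag : Tendsto (fun σ : ℝ => ((σ, σ) : ℝ × ℝ)) (𝓝[Ico (0:ℝ) 1] 1)
            (𝓝[{p : ℝ × ℝ | 0 ≤ p.1 ∧ p.1 ≤ p.2 ∧ p.2 ≤ 1}] (1, 1)) := by
          rw [tendsto_nhdsWithin_iff]
          constructor
          · exact ((continuous_id.prodMk continuous_id).tendsto 1).mono_left
              nhdsWithin_le_nhds
          · filter_upwards [self_mem_nhdsWithin] with σ hσ
            exact ⟨hσ.1, le_rfl, hσ.2.le⟩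
        exact hc.tendsto.comp hdiag
      have h2 : Tendsto (fun σ : ℝ => U T σ σ z) (𝓝[Ico (0:ℝ) 1] 1) (𝓝 z) := by
        refine Tendsto.congr' ?_ tendsto_const_nhds
        filter_upwards [self_mem_nhdsWithin] with σ hσ
        exact (hlt σ hσ z).symm
      exact tendsto_nhds_unique h1 h2
  intro s t hs hst ht1 x
  have ht0 : (0:ℝ) ≤ t := hs.trans hst
  have hs1 : s ≤ 1 := hst.trans ht1
  have hsIcc : s ∈ Icc (0:ℝ) 1 := ⟨hs, hs1⟩
  have htIcc : t ∈ Icc (0:ℝ) 1 := ⟨ht0, ht1⟩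
  -- reduce to `x ∈ D` by density
  suffices hD : ∀ z ∈ (D : Set X), P t (U T t s z) = U T t s (P s z) by
    have key : (fun z : X => P t (U T t s z)) = fun z => U T t s (P s z) :=
      Continuous.ext_on hdense ((P t).continuous.comp (U T t s).continuous)
        ((U T t s).continuous.comp (P s).continuous) hD
    exact congrFun key x
  intro x hx
  rcases eq_or_lt_of_le hs1 with hs1' | hs1'
  · -- s = 1, hence t = 1
    have ht' : t = s := le_antisymm (ht1.trans hs1'.ge) hst
    subst ht'
    rw [Uid t ⟨hs, hs1'.le⟩ x, Uid t ⟨hs, hs1'.le⟩ (P t x)]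
  · -- main case: s < 1
    have Psx_mem : P s x ∈ D := (hcomm s hsIcc x hx).1
    have hODEx := hUODE T hT s ⟨hs, hs1'⟩ x hx
    have hODEPx := hUODE T hT s ⟨hs, hs1'⟩ (P s x) Psx_mem
    set Y : ℝ → X := fun τ => P τ (U T τ s x) - U T τ s (P s x) with hYdef
    have Ymem : ∀ τ ∈ Icc s 1, Y τ ∈ D := by
      intro τ hτ
      have hτ01 : τ ∈ Icc (0:ℝ) 1 := ⟨hs.trans hτ.1, hτ.2⟩
      exact D.sub_mem ((hcomm τ hτ01 _ ((hODEx.2 τ hτ).1)).1) ((hODEPx.2 τ hτ).1)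
    -- uniform bound on `U T t ·`
    have hUt : ∀ z : X, ContinuousOn (fun σ => U T t σ z) (Icc 0 t) := by
      intro z
      refine (hUcont T hT z).comp ((continuous_id.prodMk continuous_const).continuousOn)
        (fun σ hσ => ⟨hσ.1, hσ.2, ht1⟩)
    obtain ⟨MU, hMU⟩ : ∃ M : ℝ, ∀ σ ∈ Icc (0:ℝ) t, ‖U T t σ‖ ≤ M := by
      obtain ⟨C, hC⟩ := banach_steinhaus (g := fun σ : Icc (0:ℝ) t => U T t σ) (fun z => by
        obtain ⟨C, hC⟩ := isCompact_Icc.exists_bound_of_continuousOn (hUt z)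
        exact ⟨C, fun i => hC i i.2⟩)
      exact ⟨C, fun σ hσ => hC ⟨σ, hσ⟩⟩
    -- continuity of Y on [s,t]
    have hsub01 : Icc s t ⊆ Icc (0:ℝ) 1 := Icc_subset_Icc hs ht1
    have hvcont : ContinuousOn (fun σ => U T σ s x) (Icc s t) :=
      (hUcont T hT x).comp ((continuous_const.prodMk continuous_id).continuousOn)
        (fun σ hσ => ⟨hs, hσ.1, hσ.2.trans ht1⟩)
    have hwcont : ContinuousOn (fun σ => U T σ s (P s x)) (Icc s t) :=
      (hUcont T hT (P s x)).comp ((continuous_const.prodMk continuous_id).continuousOn)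
        (fun σ hσ => ⟨hs, hσ.1, hσ.2.trans ht1⟩)
    have hYcont : ContinuousOn Y (Icc s t) := by
      refine ContinuousOn.sub ?_ hwcont
      exact clm_apply_continuousOn (fun σ hσ => hMP σ (hsub01 hσ))
        (fun z => (hPcont z).mono hsub01) hvcont
    have hfc : ContinuousOn (fun τ => U T t τ (Y τ)) (Icc s t) :=
      clm_apply_continuousOn (fun σ hσ => hMU σ ⟨hs.trans hσ.1, hσ.2⟩)
        (fun z => (hUt z).mono (Icc_subset_Icc hs le_rfl)) hYcont
    -- vanishing right derivative
    have hderiv : ∀ τ ∈ Ico s t, HasDerivWithinAt (fun σ => U T t σ (Y σ)) 0 (Ici τ) τ := by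
      intro τ hτ
      obtain ⟨hsτ, hτt⟩ := hτ
      have hτ0 : (0:ℝ) ≤ τ := hs.trans hsτ
      have hτ1 : τ < 1 := lt_of_lt_of_le hτt ht1
      have hτ01 : τ ∈ Icc (0:ℝ) 1 := ⟨hτ0, hτ1.le⟩
      have hτs1 : τ ∈ Icc s 1 := ⟨hsτ, hτ1.le⟩
      have hYτ : Y τ ∈ D := Ymem τ hτs1
      have hbase := hUODE T hT τ ⟨hτ0, hτ1⟩ (Y τ) hYτ
      have hU0 : HasDerivWithinAt (fun σ => U T σ τ (Y τ))
          (T • A τ (Y τ) + (P' τ (P τ (Y τ)) - P τ (P' τ (Y τ)))) (Icc τ 1) τ := by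
        have h := (hbase.2 τ (left_mem_Icc.2 hτ1.le)).2
        rwa [hbase.1] at h
      have hsubτ : Icc τ 1 ⊆ Icc s 1 := Icc_subset_Icc hsτ le_rfl
      have hsubτ01 : Icc τ 1 ⊆ Icc (0:ℝ) 1 := Icc_subset_Icc hτ0 le_rfl
      -- derivative of Y
      set u := U T τ s x with hu
      set q := U T τ s (P s x) with hq
      have humem : u ∈ D := (hODEx.2 τ hτs1).1
      have hv' : HasDerivWithinAt (fun σ => U T σ s x)
          (T • A τ u + (P' τ (P τ u) - P τ (P' τ u))) (Icc τ 1) τ :=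
        ((hODEx.2 τ hτs1).2).mono hsubτ
      have hw' : HasDerivWithinAt (fun σ => U T σ s (P s x))
          (T • A τ q + (P' τ (P τ q) - P τ (P' τ q))) (Icc τ 1) τ :=
        ((hODEPx.2 τ hτs1).2).mono hsubτ
      have hPv : HasDerivWithinAt (fun σ => P σ (U T σ s x))
          (P' τ u + P τ (T • A τ u + (P' τ (P τ u) - P τ (P' τ u)))) (Icc τ 1) τ :=
        clm_apply_hasDerivWithinAt (fun σ hσ => hMP σ (hsubτ01 hσ))
          (fun z => (hP' z τ hτ01).mono hsubτ01) hv'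
      have hY0 : HasDerivWithinAt Y
          (P' τ u + P τ (T • A τ u + (P' τ (P τ u) - P τ (P' τ u)))
            - (T • A τ q + (P' τ (P τ q) - P τ (P' τ q)))) (Icc τ 1) τ := hPv.sub hw'
      have hAlg : P' τ u + P τ (T • A τ u + (P' τ (P τ u) - P τ (P' τ u)))
            - (T • A τ q + (P' τ (P τ q) - P τ (P' τ q)))
          = T • A τ (Y τ) + (P' τ (P τ (Y τ)) - P τ (P' τ (Y τ))) := by
        have e1 : P τ (P τ u) = P τ u := hp2 τ hτ01 u
        have e1' : P τ (P τ (P' τ u)) = P τ (P' τ u) := hp2 τ hτ01 (P' τ u)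
        have e2 : A τ (P τ u) = P τ (A τ u) := (hcomm τ hτ01 u humem).2
        have e3 : P' τ u = P' τ (P τ u) + P τ (P' τ u) := id1 τ hτ01 u
        have e4 : P τ (P' τ (P τ u)) = 0 := id2 τ hτ01 u
        have e5 := id3 τ hτ01
        have hYτ' : Y τ = P τ u - q := rfl
        rw [hYτ']
        rw [map_sub (P τ), e1, e5 (P τ u) (P τ q), e5 (P τ u) q,
          map_sub (P τ) (P' τ (P τ u)) (P' τ q), e4,
          map_sub (A τ), map_add (P τ), ContinuousLinearMap.map_smul_of_tower,
          map_sub (P τ) (P' τ (P τ u)) (P τ (P' τ u)), e4, e1', ← e2, smul_sub]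
        rw [e3, map_add (P τ) (P' τ (P τ u)) (P τ (P' τ u)), e4, e1']
        abel
      have hY' : HasDerivWithinAt Y
          (T • A τ (Y τ) + (P' τ (P τ (Y τ)) - P τ (P' τ (Y τ)))) (Icc τ 1) τ :=
        hAlg ▸ hY0
      have hg : HasDerivWithinAt (fun σ => Y σ - U T σ τ (Y τ)) 0 (Icc τ 1) τ := by
        simpa [Pi.sub_def] using hY'.sub hU0
      -- translate to little-o and compose with the bounded operators
      have hgτ : Y τ - U T τ τ (Y τ) = 0 := by rw [hbase.1, sub_self]
      have hlit : (fun σ => Y σ - U T σ τ (Y τ)) =o[𝓝[Icc τ t] τ] fun σ => σ - τ := by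
        have h := hasDerivWithinAt_iff_isLittleO.mp hg
        simp only [hgτ, smul_zero, sub_zero] at h
        exact h.mono (nhdsWithin_mono τ (Icc_subset_Icc le_rfl ht1))
      have hbig : (fun σ => U T t σ (Y σ) - U T t τ (Y τ))
          =O[𝓝[Icc τ t] τ] fun σ => Y σ - U T σ τ (Y τ) := by
        rw [Asymptotics.isBigO_iff]
        refine ⟨MU, ?_⟩
        filter_upwards [self_mem_nhdsWithin] with σ hσ
        have hcoc : U T t σ (U T σ τ (Y τ)) = U T t τ (Y τ) := by
          have := hUcocycle T hT τ σ t hτ0 hσ.1 hσ.2 ht1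
          calc U T t σ (U T σ τ (Y τ)) = (U T t σ ∘L U T σ τ) (Y τ) := rfl
          _ = U T t τ (Y τ) := by rw [this]
        rw [← hcoc, ← map_sub]
        exact ((U T t σ).le_opNorm _).trans
          (mul_le_mul_of_nonneg_right (hMU σ ⟨hτ0.trans hσ.1, hσ.2⟩) (norm_nonneg _))
      have hf : HasDerivWithinAt (fun σ => U T t σ (Y σ)) 0 (Icc τ t) τ := by
        rw [hasDerivWithinAt_iff_isLittleO]
        simpa using hbig.trans_isLittleO hlit
      exact hf.mono_of_mem_nhdsWithin (Icc_mem_nhdsGE_of_mem ⟨le_rfl, hτt⟩)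
    -- conclude by the constancy lemma
    have hconst := constant_of_has_deriv_right_zero hfc hderiv t (right_mem_Icc.2 hst)
    have hYs : Y s = 0 := by
      simp only [hYdef]
      rw [Uid s hsIcc x, Uid s hsIcc (P s x), sub_self]
    rw [Uid t htIcc (Y t), hYs, map_zero] at hconst
    exact sub_eq_zero.mp hconst
end
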